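/- Let P̄ ∈ ℝ^{k×k}, R ∈ ℝ^{d×d} be positive definite, H ∈ ℝ^{d×k}, and let x̄ ∈ ℝ^k, z ∈ ℝ^d. Let H̃ ∈ ℝ^{(d+k)×k} be the rowwise concatenation of H and the identity I_k, let z̃ = (z, x̄) ∈ ℝ^{d+k}, and let R̃ be the block diagonal matrix with blocks R and P̄. Then (H̃ᵀ R̃^{-1} H̃)^{-1} H̃ᵀ R̃^{-1} z̃ = x̄ + K (z − H x̄), where K = P̄ Hᵀ (H P̄ Hᵀ + R)^{-1}. -/

import Mathlib

open Matrix

theorem stmt3 {k d : ℕ} (P : Matrix (Fin k) (Fin k) ℝ) (R : Matrix (Fin d) (Fin d) ℝ)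
    (hP : P.PosDef) (hR : R.PosDef) (H : Matrix (Fin d) (Fin k) ℝ)
    (xbar : Fin k → ℝ) (z : Fin d → ℝ)
    (Htil : Matrix (Fin d ⊕ Fin k) (Fin k) ℝ) (hHtil : Htil = fromRows H 1)
    (ztil : Fin d ⊕ Fin k → ℝ) (hztil : ztil = Sum.elim z xbar)
    (Rtil : Matrix (Fin d ⊕ Fin k) (Fin d ⊕ Fin k) ℝ)
    (hRtil : Rtil = fromBlocks R 0 0 P)
    (K : Matrix (Fin k) (Fin d) ℝ) (hK : K = P * Hᵀ * (H * P * Hᵀ + R)⁻¹) :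
    ((Htilᵀ * Rtil⁻¹ * Htil)⁻¹ * Htilᵀ * Rtil⁻¹) *ᵥ ztil
      = xbar + K *ᵥ (z - H *ᵥ xbar) := by
  subst hHtil hztil hRtil
  have hRd : IsUnit R.det := hR.det_pos.ne'.isUnit
  have hPd : IsUnit P.det := hP.det_pos.ne'.isUnit
  have hRi := hR.inv
  have hPi := hP.inv
  -- inverse of the block diagonal matrix
  have hRtilinv : (fromBlocks R 0 0 P)⁻¹ = fromBlocks R⁻¹ (0 : Matrix (Fin d) (Fin k) ℝ) 0 P⁻¹ := by
    apply inv_eq_right_inv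
    rw [fromBlocks_multiply]
    simp [Matrix.mul_nonsing_inv _ hRd, Matrix.mul_nonsing_inv _ hPd,
      ← fromBlocks_one]
  set S : Matrix (Fin d) (Fin d) ℝ := H * P * Hᵀ + R with hSdef
  have hS : S.PosDef := by
    have := hP.posSemidef.mul_mul_conjTranspose_same H
    simp only [conjTranspose_eq_transpose_of_trivial] at this
    exact Matrix.PosDef.posSemidef_add this hR
  have hSd : IsUnit S.det := hS.det_pos.ne'.isUnit
  set A : Matrix (Fin k) (Fin k) ℝ := Hᵀ * R⁻¹ * H + P⁻¹ with hAdef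
  have hA : A.PosDef := by
    have := hRi.posSemidef.mul_mul_conjTranspose_same Hᵀ
    simp only [conjTranspose_eq_transpose_of_trivial, transpose_transpose] at this
    exact Matrix.PosDef.posSemidef_add this hPi
  have hAd : IsUnit A.det := hA.det_pos.ne'.isUnit
  have hcol : (fromRows H (1 : Matrix (Fin k) (Fin k) ℝ))ᵀ * (fromBlocks R 0 0 P)⁻¹
      = fromCols (Hᵀ * R⁻¹) P⁻¹ := by
    rw [hRtilinv, transpose_fromRows, fromCols_mul_fromBlocks]
    simp
  have hAeq : (fromRows H (1 : Matrix (Fin k) (Fin k) ℝ))ᵀ * (fromBlocks R 0 0 P)⁻¹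
      * fromRows H (1 : Matrix (Fin k) (Fin k) ℝ) = A := by
    rw [hcol, fromCols_mul_fromRows]
    simp [hAdef]
  -- key push-through identity
  have key : A * (P * Hᵀ) = Hᵀ * R⁻¹ * S := by
    have e1 : P⁻¹ * (P * Hᵀ) = Hᵀ := by
      rw [← Matrix.mul_assoc, Matrix.nonsing_inv_mul _ hPd, Matrix.one_mul]
    have e2 : Hᵀ * R⁻¹ * R = Hᵀ := by
      rw [Matrix.mul_assoc, Matrix.nonsing_inv_mul _ hRd, Matrix.mul_one]
    rw [hAdef, hSdef, Matrix.add_mul, Matrix.mul_add, e1, e2]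
    simp [Matrix.mul_assoc]
  have h1 : A⁻¹ * (Hᵀ * R⁻¹) = K := by
    have : A⁻¹ * (Hᵀ * R⁻¹) = A⁻¹ * (Hᵀ * R⁻¹ * S * S⁻¹) := by
      rw [Matrix.mul_assoc (Hᵀ * R⁻¹), Matrix.mul_nonsing_inv _ hSd, Matrix.mul_one]
    rw [this, ← key, hK, hSdef]
    rw [Matrix.mul_assoc A, ← Matrix.mul_assoc A⁻¹, Matrix.nonsing_inv_mul _ hAd,
      Matrix.one_mul, Matrix.mul_assoc]
  have h2 : A⁻¹ * P⁻¹ = 1 - K * H := by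
    have hone : A⁻¹ * (Hᵀ * R⁻¹ * H) + A⁻¹ * P⁻¹ = 1 := by
      rw [← Matrix.mul_add, ← hAdef, Matrix.nonsing_inv_mul _ hAd]
    have : A⁻¹ * (Hᵀ * R⁻¹ * H) = K * H := by
      rw [← Matrix.mul_assoc, ← h1]
    rw [this] at hone
    linear_combination (norm := noncomm_ring) hone
  rw [Matrix.mul_assoc, hAeq, hcol, Matrix.mul_fromCols, fromCols_mulVec_sumElim,
    h1, h2, Matrix.sub_mulVec, Matrix.one_mulVec, ← Matrix.mulVec_mulVec,
    Matrix.mulVec_sub]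
  abel
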